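/- arXiv:1010.0131 — 4 statements merged into one kernel-verified Lean document; each statement's English description precedes it below -/
import Mathlib

section
/- Let U_1, ..., U_n be independent uniform random variables on (0,1] and α_1, ..., α_n distinct positive reals. Then for 0 < s ≤ 1, P[U_1^{1/α_1} · ... · U_n^{1/α_n} ≤ s] = ∑_{j=1}^{n} C_{j,n} s^{α_j}, where C_{j,n} = ∏_{k≠j} α_k/(α_k − α_j). -/
open MeasureTheory ProbabilityTheory Finset

namespace Stmt8Aux

open Polynomial

instance : IsProbabilityMeasure (volume.restrict (Set.Ioc (0:ℝ) 1)) := ⟨by simp⟩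

lemma prod_erase_succAbove {M : Type*} [CommMonoid M] {n : ℕ} (f : Fin (n+1) → M) (p : Fin (n+1)) :
    ∏ k ∈ univ.erase p, f k = ∏ i : Fin n, f (p.succAbove i) := by
  have h : (univ : Finset (Fin (n+1))).erase p = Finset.image p.succAbove univ := by
    ext k
    simp only [mem_erase, mem_univ, and_true, mem_image, true_and]
    exact ⟨fun hk => Fin.exists_succAbove_eq hk, fun ⟨i, hi⟩ => hi ▸ Fin.succAbove_ne p i⟩
  rw [h, Finset.prod_image fun a _ b _ h => Fin.succAbove_right_injective h]

lemma lagrange_id {m : ℕ} (hm : 0 < m) (β : Fin m → ℝ)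
    (hinj : Function.Injective β) (x : ℝ) (hx : ∀ k, β k ≠ x) :
    ∑ j, (∏ k ∈ univ.erase j, β k / (β k - β j)) * (β j / (β j - x))
      = ∏ k, β k / (β k - x) := by
  have hsum := Lagrange.sum_basis (s := (univ : Finset (Fin m))) (v := β)
    (hinj.injOn) ⟨⟨0, hm⟩, mem_univ _⟩
  have heval : ∑ j, eval x (Lagrange.basis univ β j) = 1 := by
    rw [← eval_finset_sum, hsum, eval_one]
  have hb : ∀ j, eval x (Lagrange.basis univ β j)
      = ∏ k ∈ univ.erase j, (x - β k) / (β j - β k) := by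
    intro j
    simp [Lagrange.basis, Lagrange.basisDivisor, eval_prod, div_eq_inv_mul]
  have key : ∀ j : Fin m,
      (∏ k, β k / (β k - x)) * eval x (Lagrange.basis univ β j)
        = (∏ k ∈ univ.erase j, β k / (β k - β j)) * (β j / (β j - x)) := by
    intro j
    rw [hb, ← Finset.mul_prod_erase univ (fun k => β k / (β k - x)) (mem_univ j),
      mul_assoc, mul_comm (β j / (β j - x)), ← Finset.prod_mul_distrib]
    congr 1
    refine Finset.prod_congr rfl fun k hk => ?_
    have hkx : β k - x ≠ 0 := sub_ne_zero.2 (hx k)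
    have hjk : β j - β k ≠ 0 := by
      rw [mem_erase] at hk
      exact sub_ne_zero.2 fun h => hk.1 (hinj h.symm)
    have hkj : β k - β j ≠ 0 := by
      rw [mem_erase] at hk
      exact sub_ne_zero.2 fun h => hk.1 (hinj h)
    field_simp
    ring
  calc ∑ j, (∏ k ∈ univ.erase j, β k / (β k - β j)) * (β j / (β j - x))
      = ∑ j, (∏ k, β k / (β k - x)) * eval x (Lagrange.basis univ β j) :=
        Finset.sum_congr rfl fun j _ => (key j).symm
    _ = (∏ k, β k / (β k - x)) * ∑ j, eval x (Lagrange.basis univ β j) := by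
        rw [Finset.mul_sum]
    _ = _ := by rw [heval, mul_one]

lemma coeff_id {m : ℕ} (hm : 0 < m) (β : Fin m → ℝ) (hβ : ∀ i, 0 < β i)
    (hinj : Function.Injective β) (γ : ℝ) (hγ : 0 < γ) (hne : ∀ j, β j ≠ γ) :
    1 - ∑ j, (∏ k ∈ univ.erase j, β k / (β k - β j)) * (γ / (γ - β j))
      = ∏ j, β j / (β j - γ) := by
  have h0 := lagrange_id hm β hinj 0 (fun k => (hβ k).ne')
  have hγid := lagrange_id hm β hinj γ hne
  have h1 : ∑ j, (∏ k ∈ univ.erase j, β k / (β k - β j)) = 1 := by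
    have e1 : ∀ j : Fin m, (∏ k ∈ univ.erase j, β k / (β k - β j)) * (β j / (β j - 0))
        = ∏ k ∈ univ.erase j, β k / (β k - β j) := by
      intro j
      rw [sub_zero, div_self (hβ j).ne', mul_one]
    have e2 : (∏ k, β k / (β k - 0)) = 1 := by
      rw [Finset.prod_eq_one]
      intro k _
      rw [sub_zero, div_self (hβ k).ne']
    rw [← e2, ← h0]
    exact Finset.sum_congr rfl fun j _ => (e1 j).symm
  have e3 : ∀ j : Fin m, γ / (γ - β j) = 1 - β j / (β j - γ) := by
    intro j
    have h1 : γ - β j ≠ 0 := sub_ne_zero.2 fun h => hne j h.symm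
    have h2 : β j - γ ≠ 0 := sub_ne_zero.2 (hne j)
    field_simp
    ring
  rw [← h1, ← hγid, ← Finset.sum_sub_distrib]
  refine Finset.sum_congr rfl fun j _ => ?_
  rw [e3 j]
  ring


lemma meas_rpow_const (c : ℝ) : Measurable fun x : ℝ => x ^ c := by measurability

lemma meas_prod_rpow {n : ℕ} (α : Fin n → ℝ) :
    Measurable fun x : Fin n → ℝ => ∏ i, x i ^ (1 / α i) :=
  Finset.measurable_prod _ fun i _ => (meas_rpow_const _).comp (measurable_pi_apply i)

lemma full_measure {n : ℕ} (α : Fin n → ℝ) (hα : ∀ i, 0 < α i) {t : ℝ} (ht : 1 ≤ t) :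
    Measure.pi (fun _ : Fin n => volume.restrict (Set.Ioc (0:ℝ) 1))
      {x | ∏ i, x i ^ (1 / α i) ≤ t} = 1 := by
  refine le_antisymm prob_le_one ?_
  have h1 : Measure.pi (fun _ : Fin n => volume.restrict (Set.Ioc (0:ℝ) 1))
      (Set.pi Set.univ fun _ => Set.Ioc 0 1) = 1 := by
    rw [Measure.pi_pi]; simp
  rw [← h1]
  apply measure_mono
  intro x hx
  rw [Set.mem_pi] at hx
  have hle : ∏ i, x i ^ (1 / α i) ≤ 1 := by
    apply Finset.prod_le_one
    · intro i _; exact Real.rpow_nonneg (hx i (Set.mem_univ i)).1.le _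
    · intro i _
      exact Real.rpow_le_one (hx i (Set.mem_univ i)).1.le (hx i (Set.mem_univ i)).2
        ((one_div_pos.2 (hα i)).le)
  exact le_trans hle ht

lemma measure_pos {n : ℕ} (hn : n ≠ 0) (α : Fin n → ℝ) (hα : ∀ i, 0 < α i)
    {u : ℝ} (hu : 0 < u) (hu1 : u ≤ 1) :
    0 < Measure.pi (fun _ : Fin n => volume.restrict (Set.Ioc (0:ℝ) 1))
      {x | ∏ i, x i ^ (1 / α i) ≤ u} := by
  have hsub : (Set.pi Set.univ fun i => Set.Ioc (0:ℝ) (u ^ α i))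
      ⊆ {x : Fin n → ℝ | ∏ i, x i ^ (1 / α i) ≤ u} := by
    intro x hx
    rw [Set.mem_pi] at hx
    have hb : ∀ i, x i ^ (1 / α i) ≤ u := by
      intro i
      have h1 : x i ^ (1 / α i) ≤ (u ^ α i) ^ (1 / α i) :=
        Real.rpow_le_rpow (hx i (Set.mem_univ i)).1.le (hx i (Set.mem_univ i)).2
          ((one_div_pos.2 (hα i)).le)
      calc x i ^ (1 / α i) ≤ (u ^ α i) ^ (1 / α i) := h1
        _ = u ^ (α i * (1 / α i)) := (Real.rpow_mul hu.le _ _).symm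
        _ = u := by rw [mul_one_div, div_self (hα i).ne', Real.rpow_one]
    have : ∏ i, x i ^ (1 / α i) ≤ ∏ _i : Fin n, u :=
      Finset.prod_le_prod (fun i _ => Real.rpow_nonneg (hx i (Set.mem_univ i)).1.le _)
        (fun i _ => hb i)
    simp only [Finset.prod_const, Finset.card_univ, Fintype.card_fin] at this
    exact le_trans this (pow_le_of_le_one hu.le hu1 hn)
  refine lt_of_lt_of_le ?_ (measure_mono hsub)
  rw [Measure.pi_pi]
  have hfac : ∀ i : Fin n, (volume.restrict (Set.Ioc (0:ℝ) 1)) (Set.Ioc 0 (u ^ α i))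
      = ENNReal.ofReal (u ^ α i) := by
    intro i
    rw [Measure.restrict_apply' measurableSet_Ioc, Set.Ioc_inter_Ioc, max_self, min_eq_left
      (Real.rpow_le_one hu.le hu1 (hα i).le), Real.volume_Ioc, sub_zero]
  rw [Finset.prod_congr rfl fun i _ => hfac i]
  refine CanonicallyOrderedAdd.prod_pos.2 fun i _ => ?_
  exact ENNReal.ofReal_pos.2 (Real.rpow_pos_of_pos hu _)


lemma main_lemma (n : ℕ) : ∀ (α : Fin (n+1) → ℝ), (∀ i, 0 < α i) → Function.Injective α →
    ∀ (s : ℝ), 0 < s → s ≤ 1 →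
    Measure.pi (fun _ : Fin (n+1) => volume.restrict (Set.Ioc (0:ℝ) 1))
        {x | ∏ i, x i ^ (1 / α i) ≤ s}
      = ENNReal.ofReal (∑ j, (∏ k ∈ univ.erase j, α k / (α k - α j)) * s ^ α j) := by
  induction n with
  | zero =>
    intro α hα hinj s hs hs1
    have hB : MeasurableSet {v : ℝ | v ^ (1 / α 0) ≤ s} :=
      measurableSet_le (meas_rpow_const _) measurable_const
    have hpre : {x : Fin 1 → ℝ | ∏ i, x i ^ (1 / α i) ≤ s}
        = (MeasurableEquiv.funUnique (Fin 1) ℝ) ⁻¹' {v | v ^ (1 / α 0) ≤ s} := by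
      ext x
      simp [Fin.prod_univ_one, MeasurableEquiv.funUnique, Equiv.funUnique]
    rw [hpre,
      show Measure.pi (fun _ : Fin 1 => volume.restrict (Set.Ioc (0:ℝ) 1))
          ((MeasurableEquiv.funUnique (Fin 1) ℝ) ⁻¹' {v | v ^ (1 / α 0) ≤ s})
          = volume.restrict (Set.Ioc (0:ℝ) 1) {v | v ^ (1 / α 0) ≤ s} from
      (measurePreserving_funUnique (volume.restrict (Set.Ioc (0:ℝ) 1)) (Fin 1)).measure_preimage
        hB.nullMeasurableSet,
      Measure.restrict_apply' measurableSet_Ioc]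
    have hset : {v : ℝ | v ^ (1 / α 0) ≤ s} ∩ Set.Ioc 0 1 = Set.Ioc 0 (s ^ α 0) := by
      ext v
      simp only [Set.mem_inter_iff, Set.mem_setOf_eq, Set.mem_Ioc]
      constructor
      · rintro ⟨h, hv0, hv1⟩
        refine ⟨hv0, ?_⟩
        rw [one_div] at h
        exact (Real.rpow_inv_le_iff_of_pos hv0.le hs.le (hα 0)).1 h
      · rintro ⟨hv0, hvs⟩
        have hsa1 : s ^ α 0 ≤ 1 := Real.rpow_le_one hs.le hs1 (hα 0).le
        refine ⟨?_, hv0, le_trans hvs hsa1⟩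
        rw [one_div]
        exact (Real.rpow_inv_le_iff_of_pos hv0.le hs.le (hα 0)).2 hvs
    rw [hset, Real.volume_Ioc, sub_zero]
    congr 1
    rw [Fin.sum_univ_one]
    have : (univ : Finset (Fin 1)).erase 0 = ∅ := by decide
    rw [this, Finset.prod_empty, one_mul]
  | succ n IH =>
    intro α hα hinj s hs hs1
    set γ := α 0 with hγdef
    set β : Fin (n+1) → ℝ := fun j => α j.succ with hβdef
    have hγ : 0 < γ := hα 0
    have hβ : ∀ j, 0 < β j := fun j => hα j.succ
    have hβinj : Function.Injective β := fun a b h => Fin.succ_injective _ (hinj h)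
    have hne : ∀ j, β j ≠ γ := fun j h => Fin.succ_ne_zero j (hinj h)
    set C : Fin (n+1) → ℝ := fun j => ∏ k ∈ univ.erase j, β k / (β k - β j) with hCdef
    set ν := volume.restrict (Set.Ioc (0:ℝ) 1) with hνdef
    set B : Set (ℝ × (Fin (n+1) → ℝ)) :=
      {p | p.1 ^ (1 / γ) * ∏ j, p.2 j ^ (1 / β j) ≤ s} with hBdef
    have hBm : MeasurableSet B :=
      measurableSet_le (((meas_rpow_const _).comp measurable_fst).mul
        ((meas_prod_rpow β).comp measurable_snd)) measurable_const
    have hmp := measurePreserving_piFinSuccAbove (fun _ : Fin (n+2) => ν) 0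
    have hpre : {x : Fin (n+2) → ℝ | ∏ i, x i ^ (1 / α i) ≤ s}
        = (MeasurableEquiv.piFinSuccAbove (fun _ => ℝ) 0) ⁻¹' B := by
      ext x
      simp only [Set.mem_setOf_eq, Set.mem_preimage]
      rw [Fin.prod_univ_succ]
      exact Iff.rfl
    rw [hpre, hmp.measure_preimage hBm.nullMeasurableSet, Measure.prod_apply hBm]
    -- notation for the inner measure
    set μn := Measure.pi (fun _ : Fin (n+1) => ν) with hμn
    set a := s ^ γ with hadef
    have ha0 : 0 < a := Real.rpow_pos_of_pos hs _
    have ha1 : a ≤ 1 := Real.rpow_le_one hs.le hs1 hγ.le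
    -- inner measure on the low part
    have h_low : ∀ v ∈ Set.Ioc (0:ℝ) a, μn (Prod.mk v ⁻¹' B) = 1 := by
      intro v hv
      have hvs : v ^ (1 / γ) ≤ s := by
        rw [one_div]
        exact (Real.rpow_inv_le_iff_of_pos hv.1.le hs.le hγ).2 hv.2
      refine le_antisymm prob_le_one ?_
      rw [← full_measure β hβ (le_refl (1:ℝ))]
      apply measure_mono
      intro y hy
      simp only [Set.mem_setOf_eq] at hy
      show v ^ (1 / γ) * ∏ j, y j ^ (1 / β j) ≤ s
      calc v ^ (1 / γ) * ∏ j, y j ^ (1 / β j) ≤ v ^ (1 / γ) * 1 := by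
            apply mul_le_mul_of_nonneg_left hy (Real.rpow_nonneg hv.1.le _)
        _ = v ^ (1 / γ) := mul_one _
        _ ≤ s := hvs
    -- inner measure on the high part
    have h_high : ∀ v ∈ Set.Ioc a 1, μn (Prod.mk v ⁻¹' B)
        = ENNReal.ofReal (∑ j, C j * (s / v ^ (1 / γ)) ^ β j) := by
      intro v hv
      have hv0 : 0 < v := lt_trans ha0 hv.1
      have hvp : 0 < v ^ (1 / γ) := Real.rpow_pos_of_pos hv0 _
      set t := s / v ^ (1 / γ) with htdef
      have ht0 : 0 < t := div_pos hs hvp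
      have hsv : s ≤ v ^ (1 / γ) := by
        have h1 : a ^ (1 / γ) ≤ v ^ (1 / γ) :=
          Real.rpow_le_rpow ha0.le hv.1.le (by positivity)
        calc s = (s ^ γ) ^ (1 / γ) := by
              rw [← Real.rpow_mul hs.le, mul_one_div, div_self hγ.ne', Real.rpow_one]
          _ ≤ v ^ (1 / γ) := h1
      have ht1 : t ≤ 1 := by
        rw [htdef, div_le_one hvp]
        exact hsv
      have hsec : Prod.mk v ⁻¹' B = {y : Fin (n+1) → ℝ | ∏ j, y j ^ (1 / β j) ≤ t} := by
        ext y
        simp only [Set.mem_preimage, hBdef, Set.mem_setOf_eq, htdef]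
        rw [le_div_iff₀ hvp, mul_comm]
      rw [hsec]
      exact IH β hβ hβinj t ht0 ht1
    -- split the integral
    have hsplit : ∫⁻ v, μn (Prod.mk v ⁻¹' B) ∂ν
        = (∫⁻ v in Set.Ioc (0:ℝ) a, μn (Prod.mk v ⁻¹' B) ∂volume)
          + ∫⁻ v in Set.Ioc a 1, μn (Prod.mk v ⁻¹' B) ∂volume := by
      rw [hνdef, ← Set.Ioc_union_Ioc_eq_Ioc ha0.le ha1,
        lintegral_union measurableSet_Ioc (Set.Ioc_disjoint_Ioc_of_le le_rfl)]
    rw [hsplit]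
    -- low part evaluates to ofReal a
    have hlowval : ∫⁻ v in Set.Ioc (0:ℝ) a, μn (Prod.mk v ⁻¹' B) ∂volume
        = ENNReal.ofReal a := by
      rw [setLIntegral_congr_fun measurableSet_Ioc h_low,
        setLIntegral_one, Real.volume_Ioc, sub_zero]
    -- the real-valued integrand on the high part
    set g : ℝ → ℝ := fun v => ∑ j, C j * s ^ β j * v ^ (-(β j / γ)) with hgdef
    have hgval : ∀ v ∈ Set.Ioc a 1, (∑ j, C j * (s / v ^ (1 / γ)) ^ β j) = g v := by
      intro v hv
      have hv0 : 0 < v := lt_trans ha0 hv.1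
      refine Finset.sum_congr rfl fun j _ => ?_
      rw [Real.div_rpow hs.le (Real.rpow_pos_of_pos hv0 _).le, ← Real.rpow_mul hv0.le,
        one_div_mul_eq_div, div_eq_mul_inv (s ^ β j), ← Real.rpow_neg hv0.le, mul_assoc]
    have hgnn : ∀ v ∈ Set.Ioc a 1, 0 ≤ g v := by
      intro v hv
      rw [← hgval v hv]
      by_contra hneg
      push_neg at hneg
      have h1 := h_high v hv
      have h2 : μn (Prod.mk v ⁻¹' B) = 0 := by
        rw [h1, ENNReal.ofReal_eq_zero]
        exact hneg.le
      have hv0 : 0 < v := lt_trans ha0 hv.1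
      have hvp : 0 < v ^ (1 / γ) := Real.rpow_pos_of_pos hv0 _
      have ht0 : 0 < s / v ^ (1 / γ) := div_pos hs hvp
      have ht1 : s / v ^ (1 / γ) ≤ 1 := by
        rw [div_le_one hvp]
        have h1' : a ^ (1 / γ) ≤ v ^ (1 / γ) :=
          Real.rpow_le_rpow ha0.le hv.1.le (by positivity)
        calc s = (s ^ γ) ^ (1 / γ) := by
              rw [← Real.rpow_mul hs.le, mul_one_div, div_self hγ.ne', Real.rpow_one]
          _ ≤ v ^ (1 / γ) := h1'
      have hsec : Prod.mk v ⁻¹' B = {y : Fin (n+1) → ℝ | ∏ j, y j ^ (1 / β j) ≤ s / v ^ (1 / γ)} := by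
        ext y
        simp only [Set.mem_preimage, hBdef, Set.mem_setOf_eq]
        rw [le_div_iff₀ hvp, mul_comm]
      rw [hsec] at h2
      exact absurd h2 (measure_pos (Nat.succ_ne_zero n) β hβ ht0 ht1).ne'
    -- integrability of g on Ioc a 1
    have hrint : ∀ r : ℝ, IntegrableOn (fun v : ℝ => v ^ r) (Set.Ioc a 1) volume := by
      intro r
      have h0 : (0:ℝ) ∉ Set.uIcc a 1 := by
        rw [Set.uIcc_of_le ha1]
        intro h
        exact absurd (Set.mem_Icc.1 h).1 (not_le.2 ha0)
      exact (intervalIntegrable_iff_integrableOn_Ioc_of_le ha1).1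
        (intervalIntegral.intervalIntegrable_rpow (Or.inr h0))
    have hgint : IntegrableOn g (Set.Ioc a 1) volume :=
      integrable_finset_sum _ fun j _ => (hrint (-(β j / γ))).const_mul _
    -- high part evaluates
    have hhighval : ∫⁻ v in Set.Ioc a 1, μn (Prod.mk v ⁻¹' B) ∂volume
        = ENNReal.ofReal (∫ v in Set.Ioc a 1, g v ∂volume) := by
      rw [setLIntegral_congr_fun measurableSet_Ioc
          (fun v hv => by rw [h_high v hv, hgval v hv])]
      rw [ofReal_integral_eq_lintegral_ofReal hgint
        ((ae_restrict_iff' measurableSet_Ioc).2 (Filter.Eventually.of_forall hgnn))]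
    rw [hlowval, hhighval,
      ← ENNReal.ofReal_add ha0.le (setIntegral_nonneg measurableSet_Ioc hgnn)]
    congr 1
    -- compute the integral of g
    have h0uIcc : (0:ℝ) ∉ Set.uIcc a 1 := by
      rw [Set.uIcc_of_le ha1]
      intro h
      exact absurd (Set.mem_Icc.1 h).1 (not_le.2 ha0)
    have hint_each : ∀ j : Fin (n+1),
        ∫ v in Set.Ioc a 1, C j * s ^ β j * v ^ (-(β j / γ)) ∂volume
          = γ / (γ - β j) * C j * s ^ β j - C j * (γ / (γ - β j)) * s ^ γ := by
      intro j
      have hgb : γ - β j ≠ 0 := sub_ne_zero.2 fun h => hne j h.symm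
      have hrne : -(β j / γ) ≠ -1 := by
        intro h
        exact hne j ((div_eq_one_iff_eq hγ.ne').1 (neg_injective h))
      rw [integral_const_mul, ← intervalIntegral.integral_of_le ha1,
        integral_rpow (Or.inr ⟨hrne, h0uIcc⟩), Real.one_rpow]
      have har : a ^ (-(β j / γ) + 1) = s ^ γ / s ^ β j := by
        rw [hadef, ← Real.rpow_mul hs.le, ← Real.rpow_sub hs]
        congr 1
        field_simp
        ring
      have hr1 : -(β j / γ) + 1 = (γ - β j) / γ := by
        field_simp
        ring
      have hsb : (0:ℝ) < s ^ β j := Real.rpow_pos_of_pos hs _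
      rw [har, hr1]
      field_simp
    have hgint_val : ∫ v in Set.Ioc a 1, g v ∂volume
        = (∑ j, γ / (γ - β j) * C j * s ^ β j)
          - (∑ j, C j * (γ / (γ - β j))) * s ^ γ := by
      rw [hgdef]
      rw [integral_finset_sum _ fun j _ => (hrint (-(β j / γ))).const_mul _]
      rw [Finset.sum_congr rfl fun j _ => hint_each j, Finset.sum_sub_distrib,
        ← Finset.sum_mul]
    rw [hgint_val]
    -- rewrite the right-hand side
    rw [Fin.sum_univ_succ
      (f := fun j : Fin (n+2) => (∏ k ∈ univ.erase j, α k / (α k - α j)) * s ^ α j)]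
    have herase0 : (∏ k ∈ univ.erase (0 : Fin (n+2)), α k / (α k - α 0))
        = ∏ i : Fin (n+1), β i / (β i - γ) := by
      rw [prod_erase_succAbove (fun k => α k / (α k - α 0)) 0]
      exact Finset.prod_congr rfl fun i _ => by rw [Fin.zero_succAbove]
    have herase : ∀ j : Fin (n+1), (∏ k ∈ univ.erase j.succ, α k / (α k - α j.succ))
        = γ / (γ - β j) * C j := by
      intro j
      rw [prod_erase_succAbove (fun k => α k / (α k - α j.succ)) j.succ, Fin.prod_univ_succ,
        Fin.succ_succAbove_zero]
      congr 1
      rw [hCdef]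
      show _ = ∏ k ∈ univ.erase j, β k / (β k - β j)
      rw [prod_erase_succAbove (fun k => β k / (β k - β j)) j]
      refine Finset.prod_congr rfl fun i _ => ?_
      rw [Fin.succ_succAbove_succ]
    have herase' : ∀ j : Fin (n+1),
        (∏ k ∈ univ.erase j.succ, α k / (α k - α j.succ)) * s ^ α j.succ
          = γ / (γ - β j) * C j * s ^ β j := by
      intro j
      rw [herase j]
    rw [herase0, Finset.sum_congr rfl fun (j : Fin (n+1)) (_ : j ∈ univ) => herase' j]
    have hcoeff := coeff_id (Nat.succ_pos n) β hβ hβinj γ hγ hne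
    rw [← hcoeff]
    simp only [hadef, hCdef, hβdef, hγdef]
    ring

end Stmt8Aux

theorem stmt_8 {Ω : Type*} [MeasurableSpace Ω] (μ : Measure Ω) [IsProbabilityMeasure μ]
    (n : ℕ) (hn : 1 ≤ n) (U : Fin n → Ω → ℝ) (hU : ∀ i, Measurable (U i))
    (hUnif : ∀ i, Measure.map (U i) μ = volume.restrict (Set.Ioc (0 : ℝ) 1))
    (hindep : iIndepFun U μ)
    (α : Fin n → ℝ) (hα : ∀ i, 0 < α i) (hdist : Function.Injective α)
    (s : ℝ) (hs : 0 < s) (hs1 : s ≤ 1) :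
    μ {ω | ∏ i, U i ω ^ (1 / α i) ≤ s}
      = ENNReal.ofReal
          (∑ j, (∏ k ∈ Finset.univ.erase j, α k / (α k - α j)) * s ^ (α j)) := by
  obtain ⟨m, rfl⟩ : ∃ m, n = m + 1 := ⟨n - 1, (Nat.succ_pred_eq_of_pos hn).symm⟩
  have hmeas : Measurable fun ω (i : Fin (m+1)) => U i ω :=
    measurable_pi_lambda _ fun i => hU i
  have hpi : Measure.pi (fun _ : Fin (m+1) => volume.restrict (Set.Ioc (0:ℝ) 1))
      = Measure.map (fun ω i => U i ω) μ := by
    refine Measure.pi_eq fun t ht => ?_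
    rw [Measure.map_apply hmeas (MeasurableSet.univ_pi ht)]
    have hpre : (fun ω i => U i ω) ⁻¹' (Set.univ.pi t) = ⋂ i ∈ Finset.univ, U i ⁻¹' t i := by
      ext ω
      simp [Set.mem_pi]
    rw [hpre, (ProbabilityTheory.iIndepFun_iff_measure_inter_preimage_eq_mul.1 hindep)
      Finset.univ (fun i _ => ht i)]
    exact Finset.prod_congr rfl fun i _ => by
      rw [← Measure.map_apply (hU i) (ht i), hUnif i]
  have hset : {ω | ∏ i, U i ω ^ (1 / α i) ≤ s}
      = (fun ω (i : Fin (m+1)) => U i ω) ⁻¹' {x | ∏ i, x i ^ (1 / α i) ≤ s} := rfl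
  rw [hset, ← Measure.map_apply hmeas
      (measurableSet_le (Stmt8Aux.meas_prod_rpow α) measurable_const),
    ← hpi, Stmt8Aux.main_lemma m α hα hdist s hs hs1]
end

section
/- For distinct positive reals α ≠ γ and integers k, l ≥ 1, define e_{r,k+l} := ∑_{s=1}^{min(r,k)} (−1)^s ((s)_{r−s}/(r−s)!)((l)_{k−s}/(k−s)!) where (w)_m denotes the Pochhammer symbol (rising factorial). Then (α/(α−γ))^k (γ/(γ−α))^l [ ∑_{s=1}^{k} ((l)_{k−s}/(k−s)!)((α−γ)/α)^s − ∑_{r=1}^{k+l−1} e_{r,k+l} ((γ−α)/γ)^r ] = 1. -/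
open Finset

private lemma poch_div_fac (s m : ℕ) :
    (ascPochhammer ℝ m).eval (s : ℝ) / (Nat.factorial m : ℝ)
      = ((s + m - 1).choose m : ℝ) := by
  rw [← ascPochhammer_eval_cast, ascPochhammer_nat_eq_ascFactorial,
    Nat.ascFactorial_eq_factorial_mul_choose']
  push_cast
  rw [mul_comm, mul_div_assoc, div_self (by exact_mod_cast Nat.factorial_ne_zero m), mul_one]

private lemma altsum (p : ℕ) : ∀ m n : ℕ, m ≤ n →
    ∑ j ∈ Finset.range (m + 1), (-1 : ℝ) ^ j * (m.choose j : ℝ) * ((n - j).choose p : ℝ)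
      = if m ≤ p then (((n - m).choose (p - m) : ℕ) : ℝ) else 0 := by
  intro m
  induction m with
  | zero => intro n hn; simp
  | succ m ih =>
    intro n hn
    have key : ∑ j ∈ Finset.range (m + 2),
        (-1 : ℝ) ^ j * ((m+1).choose j : ℝ) * ((n - j).choose p : ℝ)
        = (∑ j ∈ Finset.range (m + 1),
            (-1 : ℝ) ^ j * (m.choose j : ℝ) * ((n - j).choose p : ℝ))
          - ∑ j ∈ Finset.range (m + 1),
            (-1 : ℝ) ^ j * (m.choose j : ℝ) * ((n - 1 - j).choose p : ℝ) := by
      rw [Finset.sum_range_succ' (fun j => (-1 : ℝ) ^ j * ((m+1).choose j : ℝ) * ((n - j).choose p : ℝ)) (m+1)]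
      have h1 : ∀ i ∈ Finset.range (m+1),
          (-1 : ℝ) ^ (i+1) * ((m+1).choose (i+1) : ℝ) * ((n - (i+1)).choose p : ℝ)
          = (-1 : ℝ) ^ (i+1) * (m.choose (i+1) : ℝ) * ((n - (i+1)).choose p : ℝ)
            + (-((-1 : ℝ) ^ i * (m.choose i : ℝ) * ((n - 1 - i).choose p : ℝ))) := by
        intro i hi
        have hsub : n - (i + 1) = n - 1 - i := by omega
        rw [Nat.choose_succ_succ', hsub]
        push_cast
        ring
      rw [Finset.sum_congr rfl h1, Finset.sum_add_distrib, Finset.sum_neg_distrib]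
      have h2 : ∑ i ∈ Finset.range (m+1),
          (-1 : ℝ) ^ (i+1) * (m.choose (i+1) : ℝ) * ((n - (i+1)).choose p : ℝ)
          + (-1 : ℝ) ^ 0 * ((m+1).choose 0 : ℝ) * ((n - 0).choose p : ℝ)
          = ∑ j ∈ Finset.range (m + 1),
            (-1 : ℝ) ^ j * (m.choose j : ℝ) * ((n - j).choose p : ℝ) := by
        have h3 : ∑ j ∈ Finset.range (m + 2),
            (-1 : ℝ) ^ j * (m.choose j : ℝ) * ((n - j).choose p : ℝ)
            = ∑ j ∈ Finset.range (m + 1),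
              (-1 : ℝ) ^ j * (m.choose j : ℝ) * ((n - j).choose p : ℝ) := by
          rw [Finset.sum_range_succ, Nat.choose_eq_zero_of_lt (by omega)]
          simp
        rw [← h3, Finset.sum_range_succ' (fun j => (-1 : ℝ) ^ j * (m.choose j : ℝ) * ((n - j).choose p : ℝ)) (m+1)]
        simp
      linarith [h2]
    rw [key, ih n (by omega), ih (n-1) (by omega)]
    by_cases hmp : m + 1 ≤ p
    · rw [if_pos (by omega), if_pos (by omega), if_pos hmp]
      have e1 : n - m = (n - (m+1)) + 1 := by omega
      have e2 : p - m = (p - (m+1)) + 1 := by omega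
      have e3 : n - 1 - m = n - (m+1) := by omega
      rw [e1, e2, e3, Nat.choose_succ_succ']
      push_cast
      ring
    · by_cases hmp' : m ≤ p
      · have hpm : p = m := by omega
        rw [if_pos hmp', if_pos hmp', if_neg hmp, hpm]
        simp
      · rw [if_neg hmp', if_neg hmp', if_neg hmp]
        simp

private def Tsum (a b : ℝ) (k l : ℕ) : ℝ :=
  ∑ j ∈ Finset.range l, (((k + j).choose j : ℕ) : ℝ) * a ^ (k + 1) * b ^ j

private lemma geom (a b : ℝ) (hab : a + b = 1) :
    ∀ n : ℕ, a * ∑ j ∈ Finset.range n, b ^ j = 1 - b ^ n := by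
  intro n
  induction n with
  | zero => simp
  | succ n ih =>
    rw [Finset.sum_range_succ, mul_add, ih, pow_succ]
    linear_combination (b ^ n) * hab

private lemma Trec (a b : ℝ) (k l : ℕ) :
    Tsum a b (k + 1) (l + 1) = a * Tsum a b k (l + 1) + b * Tsum a b (k + 1) l := by
  unfold Tsum
  rw [Finset.sum_range_succ'
      (fun j => (((k + 1 + j).choose j : ℕ) : ℝ) * a ^ (k + 2) * b ^ j) l,
    Finset.mul_sum, Finset.mul_sum,
    Finset.sum_range_succ'
      (fun j => a * ((((k + j).choose j : ℕ) : ℝ) * a ^ (k + 1) * b ^ j)) l]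
  have h1 : ∀ i ∈ Finset.range l,
      (((k + 1 + (i+1)).choose (i+1) : ℕ) : ℝ) * a ^ (k + 2) * b ^ (i+1)
      = a * ((((k + (i+1)).choose (i+1) : ℕ) : ℝ) * a ^ (k + 1) * b ^ (i+1))
        + b * ((((k + 1 + i).choose i : ℕ) : ℝ) * a ^ (k + 2) * b ^ i) := by
    intro i hi
    have hp : (k + 1 + (i+1)).choose (i+1) = (k + 1 + i).choose i + (k + 1 + i).choose (i + 1) := by
      have : k + 1 + (i + 1) = (k + 1 + i) + 1 := by omega
      rw [this, Nat.choose_succ_succ']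
    have hq : k + (i + 1) = k + 1 + i := by omega
    rw [hp, hq]
    push_cast
    ring
  rw [Finset.sum_congr rfl h1, Finset.sum_add_distrib]
  simp only [Nat.choose_zero_right, Nat.add_zero, Nat.cast_one, pow_zero]
  ring

private lemma points (a b : ℝ) (hab : a + b = 1) :
    ∀ k l : ℕ, Tsum a b k (l + 1) + Tsum b a l (k + 1) = 1 := by
  intro k
  induction k with
  | zero =>
    intro l
    have h1 : Tsum a b 0 (l + 1) = a * ∑ j ∈ Finset.range (l + 1), b ^ j := by
      unfold Tsum
      rw [Finset.mul_sum]
      refine Finset.sum_congr rfl fun j hj => ?_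
      simp [Nat.choose_self]
    have h2 : Tsum b a l 1 = b ^ (l + 1) := by
      unfold Tsum
      simp
    rw [h1, h2, geom a b hab]
    ring
  | succ k ihk =>
    intro l
    induction l with
    | zero =>
      have h1 : Tsum b a 0 (k + 2) = b * ∑ j ∈ Finset.range (k + 2), a ^ j := by
        unfold Tsum
        rw [Finset.mul_sum]
        refine Finset.sum_congr rfl fun j hj => ?_
        simp [Nat.choose_self]
      have h2 : Tsum a b (k + 1) 1 = a ^ (k + 2) := by
        unfold Tsum
        simp
      rw [h1, h2, geom b a (by linarith)]
      ring
    | succ l ihl =>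
      rw [Trec a b k (l + 1), Trec b a l (k + 1)]
      have := ihk (l + 1)
      linear_combination a * this + b * ihl + hab

private lemma esum (k l r : ℕ) (hk : 1 ≤ k) (hl : 1 ≤ l) (hr : 1 ≤ r) (hr2 : r ≤ k + l - 1) :
    ∑ s ∈ Finset.Icc 1 (min r k), (-1 : ℝ) ^ s *
        ((ascPochhammer ℝ (r - s)).eval (s : ℝ) / (Nat.factorial (r - s) : ℝ)) *
        ((ascPochhammer ℝ (k - s)).eval (l : ℝ) / (Nat.factorial (k - s) : ℝ))
      = -(if r ≤ l then (((k + l - 1 - r).choose (l - r)) : ℝ) else 0) := by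
  have step1 : ∑ s ∈ Finset.Icc 1 (min r k), (-1 : ℝ) ^ s *
        ((ascPochhammer ℝ (r - s)).eval (s : ℝ) / (Nat.factorial (r - s) : ℝ)) *
        ((ascPochhammer ℝ (k - s)).eval (l : ℝ) / (Nat.factorial (k - s) : ℝ))
      = ∑ j ∈ Finset.range (min r k),
          (-((-1 : ℝ) ^ j * ((r - 1).choose j : ℝ) * (((k + l - 2 - j).choose (l - 1)) : ℝ))) := by
    rw [← Finset.Ico_add_one_right_eq_Icc, Finset.sum_Ico_eq_sum_range]
    refine Finset.sum_congr rfl fun j hj => ?_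
    rw [Finset.mem_range] at hj
    have hjr : j + 1 ≤ r := by omega
    have hjk : j + 1 ≤ k := by omega
    rw [poch_div_fac, poch_div_fac]
    have e1 : (1 + j) + (r - (1 + j)) - 1 = r - 1 := by omega
    have e2 : r - (1 + j) = (r - 1) - j := by omega
    have e3 : l + (k - (1 + j)) - 1 = k + l - 2 - j := by omega
    have e4 : k - (1 + j) = (k + l - 2 - j) - (l - 1) := by omega
    rw [e1, e2, e3, e4, Nat.choose_symm (by omega), Nat.choose_symm (by omega)]
    rw [show (1 : ℕ) + j = j + 1 by omega]
    rw [pow_succ]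
    ring
  rw [step1]
  have step2 : ∑ j ∈ Finset.range (min r k),
        (-((-1 : ℝ) ^ j * ((r - 1).choose j : ℝ) * (((k + l - 2 - j).choose (l - 1)) : ℝ)))
      = ∑ j ∈ Finset.range r,
          (-((-1 : ℝ) ^ j * ((r - 1).choose j : ℝ) * (((k + l - 2 - j).choose (l - 1)) : ℝ))) := by
    refine Finset.sum_subset (by
      intro x hx
      rw [Finset.mem_range] at *
      omega) ?_
    intro x hx hnx
    rw [Finset.mem_range] at hx
    rw [Finset.mem_range, not_lt] at hnx
    have : (k + l - 2 - x).choose (l - 1) = 0 := Nat.choose_eq_zero_of_lt (by omega)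
    rw [this]
    simp
  rw [step2, Finset.sum_neg_distrib]
  have hrr : r = (r - 1) + 1 := by omega
  rw [hrr]
  rw [show (r - 1 + 1 - 1) = r - 1 by omega]
  rw [altsum (l - 1) (r - 1) (k + l - 2) (by omega)]
  by_cases hrl : r ≤ l
  · rw [if_pos (by omega), if_pos (by omega)]
    rw [show k + l - 1 - (r - 1 + 1) = k + l - 2 - (r - 1) by omega,
      show l - (r - 1 + 1) = l - 1 - (r - 1) by omega]
  · rw [if_neg (by omega), if_neg (by omega)]

theorem stmt_15 (α γ : ℝ) (hα : 0 < α) (hγ : 0 < γ) (hne : α ≠ γ)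
    (k l : ℕ) (hk : 1 ≤ k) (hl : 1 ≤ l) :
    (α / (α - γ)) ^ k * (γ / (γ - α)) ^ l *
      ((∑ s ∈ Finset.Icc 1 k,
          ((ascPochhammer ℝ (k - s)).eval (l : ℝ)) / (Nat.factorial (k - s) : ℝ) *
            ((α - γ) / α) ^ s) -
        ∑ r ∈ Finset.Icc 1 (k + l - 1),
          (∑ s ∈ Finset.Icc 1 (min r k), (-1 : ℝ) ^ s *
              (((ascPochhammer ℝ (r - s)).eval (s : ℝ)) / (Nat.factorial (r - s) : ℝ)) *
              (((ascPochhammer ℝ (k - s)).eval (l : ℝ)) / (Nat.factorial (k - s) : ℝ))) *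
            ((γ - α) / γ) ^ r) = 1 := by
  have hαγ : α - γ ≠ 0 := sub_ne_zero.mpr hne
  have hγα : γ - α ≠ 0 := sub_ne_zero.mpr (Ne.symm hne)
  set a : ℝ := α / (α - γ) with ha_def
  set b : ℝ := γ / (γ - α) with hb_def
  have ha : a ≠ 0 := div_ne_zero (ne_of_gt hα) hαγ
  have hb : b ≠ 0 := div_ne_zero (ne_of_gt hγ) hγα
  have hab : a + b = 1 := by
    rw [ha_def, hb_def]
    field_simp
    ring
  have hxa : (α - γ) / α = a⁻¹ := by rw [ha_def, inv_div]
  have hyb : (γ - α) / γ = b⁻¹ := by rw [hb_def, inv_div]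
  rw [hxa, hyb]
  have hpow : ∀ (c : ℝ), c ≠ 0 → ∀ {m n : ℕ}, n ≤ m → c ^ m * (c⁻¹) ^ n = c ^ (m - n) := by
    intro c hc m n h
    rw [pow_sub₀ c hc h, inv_pow]
  -- rewrite first sum terms
  have h1 : ∀ s ∈ Finset.Icc 1 k,
      ((ascPochhammer ℝ (k - s)).eval (l : ℝ)) / (Nat.factorial (k - s) : ℝ) * (a⁻¹) ^ s
      = (((k + l - 1 - s).choose (k - s) : ℕ) : ℝ) * (a⁻¹) ^ s := by
    intro s hs
    rw [Finset.mem_Icc] at hs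
    rw [poch_div_fac]
    congr 3
    omega
  rw [Finset.sum_congr rfl h1]
  -- rewrite e_r sums
  have h2 : ∀ r ∈ Finset.Icc 1 (k + l - 1),
      (∑ s ∈ Finset.Icc 1 (min r k), (-1 : ℝ) ^ s *
          (((ascPochhammer ℝ (r - s)).eval (s : ℝ)) / (Nat.factorial (r - s) : ℝ)) *
          (((ascPochhammer ℝ (k - s)).eval (l : ℝ)) / (Nat.factorial (k - s) : ℝ))) * (b⁻¹) ^ r
      = -((if r ≤ l then (((k + l - 1 - r).choose (l - r)) : ℝ) else 0) * (b⁻¹) ^ r) := by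
    intro r hr
    rw [Finset.mem_Icc] at hr
    rw [esum k l r hk hl hr.1 hr.2]
    ring
  rw [Finset.sum_congr rfl h2, Finset.sum_neg_distrib, sub_neg_eq_add]
  -- shrink second sum to Icc 1 l
  have h3 : ∑ r ∈ Finset.Icc 1 (k + l - 1),
      (if r ≤ l then (((k + l - 1 - r).choose (l - r)) : ℝ) else 0) * (b⁻¹) ^ r
      = ∑ r ∈ Finset.Icc 1 l, (((k + l - 1 - r).choose (l - r) : ℕ) : ℝ) * (b⁻¹) ^ r := by
    rw [← Finset.sum_subset (Finset.Icc_subset_Icc_right (by omega : l ≤ k + l - 1))]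
    · refine Finset.sum_congr rfl fun r hr => ?_
      rw [Finset.mem_Icc] at hr
      rw [if_pos hr.2]
    · intro x hx hnx
      rw [Finset.mem_Icc] at hx
      rw [Finset.mem_Icc, not_and_or] at hnx
      have : ¬ x ≤ l := by omega
      rw [if_neg this, zero_mul]
  rw [h3]
  -- distribute and identify with Tsum
  rw [mul_add, Finset.mul_sum, Finset.mul_sum]
  have e1 : ∑ s ∈ Finset.Icc 1 k,
      a ^ k * b ^ l * ((((k + l - 1 - s).choose (k - s) : ℕ) : ℝ) * (a⁻¹) ^ s)
      = Tsum b a (l - 1) k := by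
    unfold Tsum
    rw [← Finset.Ico_add_one_right_eq_Icc, Finset.sum_Ico_eq_sum_range]
    rw [← Finset.sum_range_reflect
      (fun j => (((l - 1 + j).choose j : ℕ) : ℝ) * b ^ (l - 1 + 1) * a ^ j) k]
    refine Finset.sum_congr rfl fun j hj => ?_
    rw [Finset.mem_range] at hj
    have e1' : k + l - 1 - (1 + j) = l - 1 + (k - 1 - j) := by omega
    have e2' : k - (1 + j) = k - 1 - j := by omega
    have e3' : l - 1 + 1 = l := by omega
    rw [e1', e2', e3']
    have hap : a ^ k * (a⁻¹) ^ (1 + j) = a ^ (k - 1 - j) := by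
      rw [hpow a ha (by omega)]
      congr 1
    calc a ^ k * b ^ l * ((((l - 1 + (k - 1 - j)).choose (k - 1 - j) : ℕ) : ℝ) * (a⁻¹) ^ (1 + j))
        = (((l - 1 + (k - 1 - j)).choose (k - 1 - j) : ℕ) : ℝ) * b ^ l * (a ^ k * (a⁻¹) ^ (1 + j)) := by ring
      _ = (((l - 1 + (k - 1 - j)).choose (k - 1 - j) : ℕ) : ℝ) * b ^ l * a ^ (k - 1 - j) := by rw [hap]
  have e2 : ∑ r ∈ Finset.Icc 1 l,
      a ^ k * b ^ l * ((((k + l - 1 - r).choose (l - r) : ℕ) : ℝ) * (b⁻¹) ^ r)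
      = Tsum a b (k - 1) l := by
    unfold Tsum
    rw [← Finset.Ico_add_one_right_eq_Icc, Finset.sum_Ico_eq_sum_range]
    rw [← Finset.sum_range_reflect
      (fun j => (((k - 1 + j).choose j : ℕ) : ℝ) * a ^ (k - 1 + 1) * b ^ j) l]
    refine Finset.sum_congr rfl fun j hj => ?_
    rw [Finset.mem_range] at hj
    have e1' : k + l - 1 - (1 + j) = k - 1 + (l - 1 - j) := by omega
    have e2' : l - (1 + j) = l - 1 - j := by omega
    have e3' : k - 1 + 1 = k := by omega
    rw [e1', e2', e3']
    have hbp : b ^ l * (b⁻¹) ^ (1 + j) = b ^ (l - 1 - j) := by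
      rw [hpow b hb (by omega)]
      congr 1
    calc a ^ k * b ^ l * ((((k - 1 + (l - 1 - j)).choose (l - 1 - j) : ℕ) : ℝ) * (b⁻¹) ^ (1 + j))
        = (((k - 1 + (l - 1 - j)).choose (l - 1 - j) : ℕ) : ℝ) * a ^ k * (b ^ l * (b⁻¹) ^ (1 + j)) := by ring
      _ = (((k - 1 + (l - 1 - j)).choose (l - 1 - j) : ℕ) : ℝ) * a ^ k * b ^ (l - 1 - j) := by rw [hbp]
  rw [e1, e2]
  have := points a b hab (k - 1) (l - 1)
  rw [show l - 1 + 1 = l by omega, show k - 1 + 1 = k by omega] at this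
  linarith
end

section
/- Let a, b be nonzero reals with a + b ≠ 0, let p, q ≥ 1 be integers, and for c ≠ 0 and m ≥ 1 define f_{c,m}(z) := c z^{c−1} (−c log z)^{m−1}/(m−1)! and F_{c,m}(z) := z^c ∑_{j=0}^{m−1} (−c log z)^j/j! on (0,1]. Then for 0 < z ≤ 1: f_{a,p}(z) · F_{b,q}(z) = (a/(a+b))^p ∑_{j=0}^{q−1} ((p)_j/j!) (b/(a+b))^j f_{a+b, p+j}(z). -/
open Finset

/-- `f_{c,m}(z) = c z^{c-1} (-c log z)^{m-1}/(m-1)!` -/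
noncomputable def fdens (c : ℝ) (m : ℕ) (z : ℝ) : ℝ :=
  c * z ^ (c - 1) * (-c * Real.log z) ^ (m - 1) / (Nat.factorial (m - 1) : ℝ)

/-- `F_{c,m}(z) = z^c ∑_{j=0}^{m-1} (-c log z)^j / j!` -/
noncomputable def Fcdf (c : ℝ) (m : ℕ) (z : ℝ) : ℝ :=
  z ^ c * ∑ j ∈ Finset.range m, (-c * Real.log z) ^ j / (Nat.factorial j : ℝ)

theorem stmt_17 (a b : ℝ) (ha : a ≠ 0) (hb : b ≠ 0) (hab : a + b ≠ 0)
    (p q : ℕ) (hp : 1 ≤ p) (hq : 1 ≤ q)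
    (z : ℝ) (hz : z ∈ Set.Ioc (0 : ℝ) 1) :
    fdens a p z * Fcdf b q z
      = (a / (a + b)) ^ p *
          ∑ j ∈ Finset.range q,
            ((ascPochhammer ℝ j).eval (p : ℝ)) / (Nat.factorial j : ℝ) *
              (b / (a + b)) ^ j * fdens (a + b) (p + j) z := by
  obtain ⟨n, rfl⟩ : ∃ n, p = n + 1 := ⟨p - 1, (Nat.succ_pred_eq_of_pos hp).symm⟩
  obtain ⟨hz0, hz1⟩ := hz
  set L : ℝ := Real.log z with hL
  unfold fdens Fcdf
  simp only [Finset.mul_sum]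
  refine Finset.sum_congr rfl fun j hj => ?_
  have hpoch : (ascPochhammer ℝ j).eval ((n + 1 : ℕ) : ℝ)
      = (Nat.factorial (n + j) : ℝ) / (Nat.factorial n : ℝ) := by
    rw [eq_div_iff (by exact_mod_cast (Nat.factorial_ne_zero n)), mul_comm]
    have := factorial_mul_ascPochhammer ℝ n j
    push_cast at this ⊢
    linarith [this]
  have hsimp1 : (n + 1) - 1 = n := rfl
  have hsimp2 : (n + 1 + j) - 1 = n + j := by omega
  rw [hsimp1, hsimp2, hpoch]
  have hrpow : z ^ (a + b - 1) = z ^ (a - 1) * z ^ b := by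
    rw [show a + b - 1 = (a - 1) + b by ring, Real.rpow_add hz0]
  rw [hrpow]
  have hmp : (-a * L) ^ n = (-a) ^ n * L ^ n := mul_pow _ _ _
  have hmpb : (-b * L) ^ j = (-b) ^ j * L ^ j := mul_pow _ _ _
  have hmpab : (-(a + b) * L) ^ (n + j) = (-(a + b)) ^ (n + j) * L ^ (n + j) :=
    mul_pow _ _ _
  rw [hmp, hmpb, hmpab, pow_add, neg_pow a, neg_pow b, neg_pow (a + b), pow_add (a + b),
    pow_add L]
  have hfn : (Nat.factorial n : ℝ) ≠ 0 := by exact_mod_cast Nat.factorial_ne_zero n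
  have hfj : (Nat.factorial j : ℝ) ≠ 0 := by exact_mod_cast Nat.factorial_ne_zero j
  have hfnj : (Nat.factorial (n + j) : ℝ) ≠ 0 := by
    exact_mod_cast Nat.factorial_ne_zero (n + j)
  field_simp
  have e1 : ((a + b)⁻¹) ^ n * (a + b) ^ n = 1 := by rw [← mul_pow, inv_mul_cancel₀ hab, one_pow]
  have e2 : ((a + b)⁻¹) ^ j * (a + b) ^ j = 1 := by rw [← mul_pow, inv_mul_cancel₀ hab, one_pow]
  linear_combination (-(a ^ n * L ^ n * L ^ j * b ^ j * (-1) ^ n * (-1) ^ j) * ((a + b)⁻¹ ^ j * (a + b) ^ j)) * e1 + (-(a ^ n * L ^ n * L ^ j * b ^ j * (-1) ^ n * (-1) ^ j)) * e2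
end

section
/- Let U be uniform on (0,1], β > 0, and let M be a Lévy measure on ℝ^d (i.e., ∫ min(1, ‖x‖²) M(dx) < ∞ and M({0}) = 0). Then the measure M^{β}(A) := β ∫_0^1 M(s^{−1}A) s^{β−1} ds, for Borel A ⊆ ℝ^d \ {0}, is again a Lévy measure: ∫ min(1, ‖x‖²) M^{β}(dx) < ∞. -/
open MeasureTheory ENNReal

theorem stmt_18 (d : ℕ) (M : Measure (EuclideanSpace ℝ (Fin d)))
    [SigmaFinite M] (hM0 : M {0} = 0)
    (hMlevy : ∫⁻ x, ENNReal.ofReal (min 1 (‖x‖ ^ 2)) ∂M < ⊤)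
    (β : ℝ) (hβ : 0 < β)
    (Mβ : Measure (EuclideanSpace ℝ (Fin d)))
    (hMβ : ∀ A : Set (EuclideanSpace ℝ (Fin d)), MeasurableSet A →
      Mβ A = ∫⁻ s in Set.Ioc (0 : ℝ) 1,
        M ((fun x => s • x) ⁻¹' A) * ENNReal.ofReal (β * s ^ (β - 1))) :
    ∫⁻ x, ENNReal.ofReal (min 1 (‖x‖ ^ 2)) ∂Mβ < ⊤ := by
  set E := EuclideanSpace ℝ (Fin d)
  set w : ℝ → ℝ≥0∞ := fun s => ENNReal.ofReal (β * s ^ (β - 1)) with hw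
  set ν : Measure ℝ := (volume.restrict (Set.Ioc (0:ℝ) 1)).withDensity w with hν
  set κ : ℝ → Measure E := fun s => M.map (fun x => s • x) with hκ
  have hsmul : ∀ s : ℝ, Measurable (fun x : E => s • x) := fun s =>
    (continuous_const_smul s).measurable
  have hκcoe : ∀ (A : Set E), MeasurableSet A →
      Measurable (fun s : ℝ => M ((fun x : E => s • x) ⁻¹' A)) := by
    intro A hA
    have : (fun s : ℝ => M ((fun x : E => s • x) ⁻¹' A))
        = fun s => M (Prod.mk s ⁻¹' ((fun p : ℝ × E => p.1 • p.2) ⁻¹' A)) := rfl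
    rw [this]
    exact measurable_measure_prodMk_left ((measurable_fst.smul measurable_snd) hA)
  have hκmeas : Measurable κ := by
    apply Measure.measurable_of_measurable_coe
    intro A hA
    have : (fun s : ℝ => κ s A) = fun s => M ((fun x : E => s • x) ⁻¹' A) := by
      funext s; rw [hκ, Measure.map_apply (hsmul s) hA]
    rw [this]; exact hκcoe A hA
  have hwmeas : Measurable w :=
    (measurable_const.mul (measurable_id.pow_const _)).ennreal_ofReal
  have hf : Measurable (fun x : E => ENNReal.ofReal (min 1 (‖x‖ ^ 2))) :=
    ((continuous_const.min ((continuous_norm).pow 2)).measurable).ennreal_ofReal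
  -- Mβ equals the bind
  have hMβ' : Mβ = ν.bind κ := by
    ext A hA
    rw [hMβ A hA, Measure.bind_apply hA hκmeas.aemeasurable, hν,
      lintegral_withDensity_eq_lintegral_mul _ hwmeas]
    · congr 1
      funext s
      simp only [Pi.mul_apply, hκ, Measure.map_apply (hsmul s) hA]
      ring
    · exact (Measure.measurable_coe hA).comp hκmeas
  rw [hMβ', Measure.lintegral_bind hκmeas.aemeasurable hf.aemeasurable]
  -- compute the weight integral finiteness
  have hwint : ∫⁻ s in Set.Ioc (0:ℝ) 1, w s < ⊤ := by
    have hInt : IntegrableOn (fun s : ℝ => β * s ^ (β - 1)) (Set.Ioc 0 1) := by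
      have h1 : IntervalIntegrable (fun s : ℝ => s ^ (β - 1)) volume 0 1 :=
        intervalIntegral.intervalIntegrable_rpow' (by linarith)
      have := (h1.smul β)
      have h2 : IntervalIntegrable (fun s : ℝ => β * s ^ (β - 1)) volume 0 1 := by
        simpa [Pi.smul_def, smul_eq_mul] using this
      have := h2.1
      simpa [Set.uIoc_of_le (by norm_num : (0:ℝ) ≤ 1)] using this
    rw [hw]
    rw [← ofReal_integral_eq_lintegral_ofReal hInt]
    · exact ofReal_lt_top
    · filter_upwards [ae_restrict_mem measurableSet_Ioc] with s hs
      exact mul_nonneg hβ.le (Real.rpow_nonneg hs.1.le _)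
  set C := ∫⁻ x, ENNReal.ofReal (min 1 (‖x‖ ^ 2)) ∂M with hC
  set F : ℝ → ℝ≥0∞ := fun s => ∫⁻ x, ENNReal.ofReal (min 1 (‖x‖ ^ 2)) ∂(κ s) with hF
  have hFmeas : Measurable F := (Measure.measurable_lintegral hf).comp hκmeas
  have key : ∫⁻ s, F s ∂ν = ∫⁻ s in Set.Ioc (0:ℝ) 1, w s * F s :=
    lintegral_withDensity_eq_lintegral_mul _ hwmeas hFmeas
  have hFle : ∀ s ∈ Set.Ioc (0:ℝ) 1, F s ≤ C := by
    intro s hs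
    rw [hF]
    simp only
    rw [hκ]
    simp only
    rw [lintegral_map hf (hsmul s)]
    refine lintegral_mono fun x => ?_
    refine ENNReal.ofReal_le_ofReal (min_le_min le_rfl ?_)
    have h1 : ‖s • x‖ ≤ ‖x‖ := by
      rw [norm_smul]
      calc ‖s‖ * ‖x‖ ≤ 1 * ‖x‖ := by
            apply mul_le_mul_of_nonneg_right _ (norm_nonneg _)
            rw [Real.norm_eq_abs, abs_of_pos hs.1]; exact hs.2
        _ = ‖x‖ := one_mul _
    exact pow_le_pow_left₀ (norm_nonneg _) h1 2
  have hbound : ∫⁻ s, F s ∂ν ≤ (∫⁻ s in Set.Ioc (0:ℝ) 1, w s) * C := by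
    rw [key]
    calc ∫⁻ s in Set.Ioc (0:ℝ) 1, w s * F s
        ≤ ∫⁻ s in Set.Ioc (0:ℝ) 1, w s * C := by
          refine lintegral_mono_ae ?_
          filter_upwards [ae_restrict_mem measurableSet_Ioc] with s hs
          exact mul_le_mul_right (hFle s hs) _
      _ = (∫⁻ s in Set.Ioc (0:ℝ) 1, w s) * C := lintegral_mul_const' C w (ne_of_lt hMlevy)
  exact lt_of_le_of_lt hbound (ENNReal.mul_lt_top hwint hMlevy)
end
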